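/- arXiv:2308.06400 — 8 statements merged into one kernel-verified Lean document; each statement's English description precedes it below -/
import Mathlib

section
/- A linear relation A is positive (⟨f,g⟩ ≥ 0 for all (f,g) ∈ A) if and only if its Krein transform K(A) is a symmetric contraction, i.e., K(A) ⊆ K(A)* and ‖k‖ ≤ ‖h‖ for all (h,k) ∈ K(A). -/
open scoped InnerProductSpace

variable {H : Type*} [NormedAddCommGroup H] [InnerProductSpace ℂ H]

/-- The adjoint of a linear relation `T ⊆ H × H`:
`T* = {(h,k) : ⟨k,f⟩ = ⟨h,g⟩ for all (f,g) ∈ T}` (inner product antilinear in the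
first entry). -/
def adjointRel (T : Submodule ℂ (H × H)) : Submodule ℂ (H × H) where
  carrier := {p | ∀ q ∈ T, (inner ℂ p.2 q.1 : ℂ) = inner ℂ p.1 q.2}
  add_mem' := by
    intro a b ha hb q hq
    simp only [Prod.fst_add, Prod.snd_add, inner_add_left]
    rw [ha q hq, hb q hq]
  zero_mem' := by intro q hq; simp
  smul_mem' := by
    intro c p hp q hq
    simp only [Prod.smul_fst, Prod.smul_snd, inner_smul_left]
    rw [hp q hq]

/-- The map `(f,g) ↦ (f+g, f−g)` defining the Krein transform. -/
noncomputable def kreinMap : (H × H) →ₗ[ℂ] (H × H) :=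
  (LinearMap.fst ℂ H H + LinearMap.snd ℂ H H).prod
    (LinearMap.fst ℂ H H - LinearMap.snd ℂ H H)

/-- The Krein transform `K(T) = {(f+g, f−g) : (f,g) ∈ T}` of a linear relation. -/
noncomputable def krein (T : Submodule ℂ (H × H)) : Submodule ℂ (H × H) :=
  T.map kreinMap

/-- The inverse relation map `(f,g) ↦ (g,f)`. -/
def invMap : (H × H) →ₗ[ℂ] (H × H) :=
  (LinearMap.snd ℂ H H).prod (LinearMap.fst ℂ H H)

/-- The negation map `(f,g) ↦ (f,−g)`, so that `T.map negMap = -T`. -/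
def negMap : (H × H) →ₗ[ℂ] (H × H) :=
  (LinearMap.fst ℂ H H).prod (-(LinearMap.snd ℂ H H))

/-- The map `(f,g) ↦ (g,−f)`, so that `T.map negInvMap = -T⁻¹`. -/
def negInvMap : (H × H) →ₗ[ℂ] (H × H) :=
  (LinearMap.snd ℂ H H).prod (-(LinearMap.fst ℂ H H))

/-- The orthogonal complement of a linear relation inside `H × H`, with respect to
the product inner product. -/
def orthRel (T : Submodule ℂ (H × H)) : Submodule ℂ (H × H) where
  carrier := {p | ∀ q ∈ T, (inner ℂ q.1 p.1 : ℂ) + inner ℂ q.2 p.2 = 0}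
  add_mem' := by
    intro a b ha hb q hq
    simp only [Prod.fst_add, Prod.snd_add, inner_add_right]
    linear_combination ha q hq + hb q hq
  zero_mem' := by intro q hq; simp
  smul_mem' := by
    intro c p hp q hq
    simp only [Prod.smul_fst, Prod.smul_snd, inner_smul_right]
    linear_combination c * hp q hq

lemma krein_mem_iff (A : Submodule ℂ (H × H)) (q : H × H) :
    q ∈ krein A ↔ ∃ p ∈ A, (p.1 + p.2, p.1 - p.2) = q := by
  simp [krein, kreinMap, Submodule.mem_map, LinearMap.prod_apply, Prod.ext_iff]

lemma inner_symm_of_im_zero (A : Submodule ℂ (H × H))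
    (h : ∀ p ∈ A, ((inner ℂ p.1 p.2 : ℂ)).im = 0) :
    ∀ p ∈ A, ∀ q ∈ A, (inner ℂ p.1 q.2 : ℂ) = inner ℂ p.2 q.1 := by
  intro p hp q hq
  have h1 := h (p + q) (A.add_mem hp hq)
  have h2 := h (p + Complex.I • q) (A.add_mem hp (A.smul_mem _ hq))
  have hpp := h p hp
  have hqq := h q hq
  simp only [Prod.fst_add, Prod.snd_add, Prod.smul_fst, Prod.smul_snd,
    inner_add_left, inner_add_right, inner_smul_left, inner_smul_right] at h1 h2
  rw [← inner_conj_symm p.2 q.1]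
  set a := (inner ℂ p.1 q.2 : ℂ)
  set b := (inner ℂ q.1 p.2 : ℂ)
  rw [Complex.ext_iff]
  constructor <;>
  · simp only [Complex.add_im, Complex.add_re, Complex.mul_im, Complex.mul_re,
      Complex.conj_re, Complex.conj_im, map_add, Complex.conj_I, Complex.neg_re,
      Complex.neg_im, Complex.I_re, Complex.I_im, hpp, hqq] at h1 h2 ⊢
    nlinarith [h1, h2]

/-- `A` is positive iff its Krein transform is a symmetric contraction. -/
theorem positive_iff_krein_symmetric_contraction (A : Submodule ℂ (H × H)) :
    (∀ p ∈ A, ((inner ℂ p.1 p.2 : ℂ)).im = 0 ∧ 0 ≤ ((inner ℂ p.1 p.2 : ℂ)).re) ↔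
      (krein A ≤ adjointRel (krein A) ∧ ∀ q ∈ krein A, ‖q.2‖ ≤ ‖q.1‖) := by
  constructor
  · intro h
    constructor
    · intro x hx y hy
      obtain ⟨p, hp, rfl⟩ := (krein_mem_iff A x).mp hx
      obtain ⟨q, hq, rfl⟩ := (krein_mem_iff A y).mp hy
      have key := inner_symm_of_im_zero A (fun p hp => (h p hp).1) p hp q hq
      simp only [inner_add_left, inner_add_right, inner_sub_left, inner_sub_right]
      linear_combination 2 * key
    · intro x hx
      obtain ⟨p, hp, rfl⟩ := (krein_mem_iff A x).mp hx
      have hre := (h p hp).2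
      have h1 : ‖p.1 - p.2‖ ^ 2 ≤ ‖p.1 + p.2‖ ^ 2 := by
        rw [@norm_add_sq ℂ, @norm_sub_sq ℂ]
        simp only [RCLike.re_to_complex]
        nlinarith [hre]
      exact (pow_le_pow_iff_left₀ (norm_nonneg _) (norm_nonneg _) two_ne_zero).mp h1
  · intro ⟨hsym, hcon⟩ p hp
    have hx : (p.1 + p.2, p.1 - p.2) ∈ krein A := (krein_mem_iff A _).mpr ⟨p, hp, rfl⟩
    have h1 := hsym hx _ hx
    simp only [inner_add_left, inner_add_right, inner_sub_left, inner_sub_right] at h1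
    have him : ((inner ℂ p.1 p.2 : ℂ)).im = 0 := by
      have h2 : (inner ℂ p.1 p.2 : ℂ) = inner ℂ p.2 p.1 := by linear_combination h1 / 2
      rw [← inner_conj_symm p.2 p.1] at h2
      have h3 := congrArg Complex.im h2
      simp only [Complex.conj_im] at h3
      linarith
    refine ⟨him, ?_⟩
    have hc := hcon _ hx
    have h1 : ‖p.1 - p.2‖ ^ 2 ≤ ‖p.1 + p.2‖ ^ 2 :=
      pow_le_pow_left₀ (norm_nonneg _) hc 2
    rw [@norm_add_sq ℂ, @norm_sub_sq ℂ] at h1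
    simp only [RCLike.re_to_complex] at h1
    linarith
end

section
/- If A is a positive linear relation that is unbounded or has a nontrivial kernel, then its Krein transform K(A) is a symmetric contraction of operator norm equal to one. -/
open scoped InnerProductSpace

variable {H : Type*} [NormedAddCommGroup H] [InnerProductSpace ℂ H]

/-- If a positive relation `A` is unbounded or has nontrivial kernel, then `K(A)` is a
symmetric contraction with norm one. -/
theorem krein_norm_one (A : Submodule ℂ (H × H))
    (hpos : ∀ p ∈ A, ((inner ℂ p.1 p.2 : ℂ)).im = 0 ∧ 0 ≤ ((inner ℂ p.1 p.2 : ℂ)).re)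
    (h : (¬ ∃ C > (0 : ℝ), ∀ p ∈ A, ‖p.2‖ ≤ C * ‖p.1‖) ∨
      ∃ f : H, f ≠ 0 ∧ ((f, (0 : H)) : H × H) ∈ A) :
    krein A ≤ adjointRel (krein A) ∧ (∀ q ∈ krein A, ‖q.2‖ ≤ ‖q.1‖) ∧
      sSup {r : ℝ | ∃ p ∈ krein A, p ≠ 0 ∧ r = ‖p.2‖ / ‖p.1‖} = 1 := by
  -- symmetry of the form associated to a positive relation
  have hsym : ∀ p ∈ A, ∀ q ∈ A, (inner ℂ p.1 q.2 : ℂ) = inner ℂ p.2 q.1 := by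
    intro p hp q hq
    have h1 := (hpos (p + q) (A.add_mem hp hq)).1
    have h2 := (hpos (p + Complex.I • q) (A.add_mem hp (A.smul_mem _ hq))).1
    have hpp := (hpos p hp).1
    have hqq := (hpos q hq).1
    simp only [Prod.fst_add, Prod.snd_add, Prod.smul_fst, Prod.smul_snd,
      inner_add_left, inner_add_right, inner_smul_left, inner_smul_right,
      Complex.conj_I] at h1 h2
    rw [← inner_conj_symm p.2 q.1]
    set a := (inner ℂ p.1 q.2 : ℂ)
    set b := (inner ℂ q.1 p.2 : ℂ)
    simp only [Complex.add_im, Complex.mul_im, Complex.add_re, Complex.mul_re,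
      Complex.neg_re, Complex.neg_im, Complex.I_re, Complex.I_im] at h1 h2
    rw [Complex.ext_iff]
    constructor <;> simp [Complex.conj_re, Complex.conj_im] <;> linarith
  -- contraction property
  have hcon : ∀ q ∈ krein A, ‖q.2‖ ≤ ‖q.1‖ := by
    intro q hq
    obtain ⟨p, hp, rfl⟩ := hq
    show ‖p.1 - p.2‖ ≤ ‖p.1 + p.2‖
    have hre := (hpos p hp).2
    have e1 : ‖p.1 + p.2‖ ^ 2 = ‖p.1‖ ^ 2 + 2 * ((inner ℂ p.1 p.2 : ℂ)).re + ‖p.2‖ ^ 2 := by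
      have := @norm_add_sq ℂ _ _ _ _ p.1 p.2
      simpa using this
    have e2 : ‖p.1 - p.2‖ ^ 2 = ‖p.1‖ ^ 2 - 2 * ((inner ℂ p.1 p.2 : ℂ)).re + ‖p.2‖ ^ 2 := by
      have := @norm_sub_sq ℂ _ _ _ _ p.1 p.2
      simpa using this
    nlinarith [norm_nonneg (p.1 + p.2), norm_nonneg (p.1 - p.2)]
  refine ⟨?_, hcon, ?_⟩
  · -- symmetry of the Krein transform
    intro x hx q hq
    obtain ⟨p, hp, rfl⟩ := hx
    obtain ⟨p', hp', rfl⟩ := hq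
    show (inner ℂ (p.1 - p.2) (p'.1 + p'.2) : ℂ) = inner ℂ (p.1 + p.2) (p'.1 - p'.2)
    simp only [inner_add_left, inner_add_right, inner_sub_left, inner_sub_right]
    linear_combination 2 * hsym p hp p' hp'
  · -- the norm is one
    set s := {r : ℝ | ∃ p ∈ krein A, p ≠ 0 ∧ r = ‖p.2‖ / ‖p.1‖} with hs
    have hub : ∀ r ∈ s, r ≤ 1 := by
      rintro r ⟨q, hq, hq0, rfl⟩
      have hle := hcon q hq
      rcases eq_or_ne q.1 0 with h1 | h1
      · exfalso
        apply hq0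
        have : ‖q.2‖ ≤ 0 := by simpa [h1] using hle
        have h2 : q.2 = 0 := norm_le_zero_iff.mp this
        exact Prod.ext h1 h2
      · have : (0 : ℝ) < ‖q.1‖ := norm_pos_iff.mpr h1
        exact div_le_one_of_le₀ hle this.le
    have hbdd : BddAbove s := ⟨1, hub⟩
    have hkey : ∀ ε > (0 : ℝ), ∃ r ∈ s, 1 - ε ≤ r := by
      intro ε hε
      rcases h with hunb | ⟨f, hf, hfA⟩
      · push_neg at hunb
        obtain ⟨p, hp, hg⟩ := hunb (2 / ε + 1) (by positivity)
        have hf0 := norm_nonneg p.1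
        have key : 2 * ‖p.1‖ + ε * ‖p.1‖ < ε * ‖p.2‖ := by
          have h' := mul_lt_mul_of_pos_left hg hε
          have e : ε * ((2 / ε + 1) * ‖p.1‖) = 2 * ‖p.1‖ + ε * ‖p.1‖ := by
            field_simp
          linarith [e ▸ h']
        have hfg : ‖p.1‖ < ‖p.2‖ := by
          have h1 : ε * ‖p.1‖ < ε * ‖p.2‖ := by nlinarith
          exact lt_of_mul_lt_mul_left h1 hε.le
        have tri1 : ‖p.1 + p.2‖ ≤ ‖p.1 - p.2‖ + 2 * ‖p.1‖ := by
          calc ‖p.1 + p.2‖ = ‖-(p.1 - p.2) + (p.1 + p.1)‖ := by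
                rw [show -(p.1 - p.2) + (p.1 + p.1) = p.1 + p.2 by abel]
            _ ≤ ‖-(p.1 - p.2)‖ + ‖p.1 + p.1‖ := norm_add_le _ _
            _ ≤ ‖p.1 - p.2‖ + 2 * ‖p.1‖ := by
                rw [norm_neg]
                have := norm_add_le p.1 p.1
                linarith
        have tri2 : ‖p.2‖ ≤ ‖p.1 + p.2‖ + ‖p.1‖ := by
          calc ‖p.2‖ = ‖(p.1 + p.2) - p.1‖ := by rw [add_sub_cancel_left]
            _ ≤ ‖p.1 + p.2‖ + ‖p.1‖ := norm_sub_le _ _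
        have hq1pos : (0 : ℝ) < ‖p.1 + p.2‖ := by linarith
        have h1 : p.1 + p.2 ≠ 0 := norm_pos_iff.mp hq1pos
        have hmain : (1 - ε) * ‖p.1 + p.2‖ ≤ ‖p.1 - p.2‖ := by
          nlinarith [mul_le_mul_of_nonneg_left tri2 hε.le]
        refine ⟨‖p.1 - p.2‖ / ‖p.1 + p.2‖,
          ⟨(p.1 + p.2, p.1 - p.2), ⟨p, hp, rfl⟩,
            fun hc => h1 (by simpa using congrArg Prod.fst hc), rfl⟩, ?_⟩
        rw [le_div_iff₀ hq1pos]
        exact hmain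
      · refine ⟨1, ?_, by linarith⟩
        refine ⟨(f + 0, f - 0), ⟨(f, 0), hfA, rfl⟩, ?_, ?_⟩
        · simp [Prod.ext_iff, hf]
        · simp [hf, div_self, norm_eq_zero]
    have hne : s.Nonempty := by
      obtain ⟨r, hr, -⟩ := hkey 1 one_pos
      exact ⟨r, hr⟩
    apply le_antisymm
    · exact Real.sSup_le hub one_pos.le
    · by_contra hlt
      push_neg at hlt
      obtain ⟨r, hr, hr1⟩ := hkey ((1 - sSup s) / 2) (by linarith)
      have := le_csSup hbdd hr
      linarith
end

section
/- A linear relation A is quasi-null (⟨f,g⟩ = 0 for all (f,g) ∈ A) if and only if its Krein transform K(A) is both symmetric and isometric (‖k‖ = ‖h‖ for all (h,k) ∈ K(A)). -/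
open scoped InnerProductSpace

variable {H : Type*} [NormedAddCommGroup H] [InnerProductSpace ℂ H]

/-- `A` is quasi-null iff its Krein transform is symmetric and isometric. -/
theorem quasiNull_iff_krein_symmetric_isometric (A : Submodule ℂ (H × H)) :
    (∀ p ∈ A, (inner ℂ p.1 p.2 : ℂ) = 0) ↔
      (krein A ≤ adjointRel (krein A) ∧ ∀ q ∈ krein A, ‖q.2‖ = ‖q.1‖) := by

  have kmem : ∀ p : H × H, p ∈ A → kreinMap p ∈ krein A := fun p hp =>
    Submodule.mem_map_of_mem hp
  have kfst : ∀ p : H × H, (kreinMap p).1 = p.1 + p.2 := fun p => rfl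
  have ksnd : ∀ p : H × H, (kreinMap p).2 = p.1 - p.2 := fun p => rfl
  constructor
  · intro hA
    have key : ∀ p ∈ A, ∀ q ∈ A, (inner ℂ p.1 q.2 : ℂ) = 0 := by
      intro p hp q hq
      have h1 := hA (p + q) (A.add_mem hp hq)
      have h2 := hA (p + Complex.I • q) (A.add_mem hp (A.smul_mem _ hq))
      simp only [Prod.fst_add, Prod.snd_add, Prod.smul_fst, Prod.smul_snd,
        inner_add_left, inner_add_right, inner_smul_left, inner_smul_right,
        hA p hp, hA q hq, Complex.conj_I] at h1 h2
      linear_combination h1/2 - Complex.I/2 * h2 + ((inner ℂ p.1 q.2 : ℂ) - inner ℂ q.1 p.2)/2 * Complex.I_sq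
    constructor
    · rintro x ⟨p, hp, rfl⟩ y ⟨r, hr, rfl⟩
      have h1 : (inner ℂ p.1 r.2 : ℂ) = 0 := key p hp r hr
      have h2 : (inner ℂ p.2 r.1 : ℂ) = 0 := by
        have := key r hr p hp
        rw [← inner_conj_symm, this, map_zero]
      simp only [kfst, ksnd, inner_add_left, inner_add_right, inner_sub_left,
        inner_sub_right, h1, h2]
      ring
    · rintro y ⟨p, hp, rfl⟩
      have h0 : (inner ℂ p.1 p.2 : ℂ) = 0 := hA p hp
      rw [kfst, ksnd, ← Real.sqrt_sq (norm_nonneg (p.1 - p.2)),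
        ← Real.sqrt_sq (norm_nonneg (p.1 + p.2))]
      congr 1
      rw [@norm_add_sq ℂ, @norm_sub_sq ℂ, h0]
      simp
  · rintro ⟨hsym, hiso⟩ p hp
    have hk := kmem p hp
    have h1 := hsym hk (kreinMap p) hk
    have h2 := hiso (kreinMap p) hk
    simp only [kfst, ksnd, inner_add_left, inner_add_right, inner_sub_left,
      inner_sub_right] at h1
    have hconj : (inner ℂ p.1 p.2 : ℂ) = inner ℂ p.2 p.1 := by linear_combination h1/2
    have hre : RCLike.re (inner ℂ p.1 p.2 : ℂ) = 0 := by
      rw [kfst, ksnd] at h2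
      have hsq : ‖p.1 - p.2‖ ^ 2 = ‖p.1 + p.2‖ ^ 2 := by rw [h2]
      rw [@norm_add_sq ℂ, @norm_sub_sq ℂ] at hsq
      linarith
    have him : (inner ℂ p.1 p.2 : ℂ).im = 0 := by
      have := congrArg Complex.im hconj
      rw [← inner_conj_symm p.2 p.1, Complex.conj_im] at this
      linarith
    exact Complex.ext (by simpa using hre) him
end

section
/- For a linear relation A, the following are equivalent: (i) A is quasi-null, i.e., ⟨f,g⟩ = 0 for all (f,g) ∈ A; (ii) both A and −A are contained in A*; (iii) dom A is orthogonal to ran A. -/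
open scoped InnerProductSpace

variable {H : Type*} [NormedAddCommGroup H] [InnerProductSpace ℂ H]

/-- Characterizations of quasi-null relations: `A` quasi-null iff `A, −A ⊆ A*` iff
`dom A ⊥ ran A`. -/
theorem quasiNull_equivalences (A : Submodule ℂ (H × H)) :
    ((∀ p ∈ A, (inner ℂ p.1 p.2 : ℂ) = 0) ↔
        (A ≤ adjointRel A ∧ A.map negMap ≤ adjointRel A)) ∧
    ((∀ p ∈ A, (inner ℂ p.1 p.2 : ℂ) = 0) ↔
        ∀ p ∈ A, ∀ q ∈ A, (inner ℂ p.1 q.2 : ℂ) = 0) := by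
  have key : (∀ p ∈ A, (inner ℂ p.1 p.2 : ℂ) = 0) →
      ∀ p ∈ A, ∀ q ∈ A, (inner ℂ p.1 q.2 : ℂ) = 0 := by
    intro h p hp q hq
    have h1 := h (p + q) (add_mem hp hq)
    have h2 := h (p + (Complex.I : ℂ) • q) (add_mem hp (A.smul_mem _ hq))
    have hpp := h p hp
    have hqq := h q hq
    simp only [Prod.fst_add, Prod.snd_add, Prod.smul_fst, Prod.smul_snd,
      inner_add_add_self, inner_add_left, inner_add_right, inner_smul_left,
      inner_smul_right, Complex.conj_I] at h1 h2
    -- h1 : a + b = 0 (after subtracting hpp, hqq), h2 : I a - I b = 0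
    have ha : (inner ℂ p.1 q.2 : ℂ) + inner ℂ q.1 p.2 = 0 := by
      linear_combination h1 - hpp - hqq
    have hb : (inner ℂ p.1 q.2 : ℂ) = inner ℂ q.1 p.2 := by
      linear_combination -Complex.I * h2 + Complex.I * hpp +
        ((inner ℂ p.1 q.2 : ℂ) - inner ℂ q.1 p.2 - Complex.I * inner ℂ q.1 q.2) * Complex.I_mul_I +
        Complex.I * hqq
    linear_combination (ha + hb) / 2
  constructor
  · constructor
    · intro h
      have hd := key h
      constructor
      · intro p hp q hq
        rw [← inner_conj_symm, hd q hq p hp, hd p hp q hq]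
        simp
      · rintro p hp q hq
        obtain ⟨r, hr, rfl⟩ := hp
        simp only [negMap, LinearMap.prod_apply, LinearMap.fst_apply, LinearMap.snd_apply,
          Function.prod, LinearMap.neg_apply, inner_neg_left]
        rw [← inner_conj_symm, hd q hq r hr, hd r hr q hq]
        simp
    · rintro ⟨h1, h2⟩ p hp
      have e1 := h1 hp p hp
      have e2 := h2 ⟨p, hp, rfl⟩ p hp
      simp only [negMap, LinearMap.prod_apply, LinearMap.fst_apply, LinearMap.snd_apply,
        Function.prod, LinearMap.neg_apply, inner_neg_left] at e2
      linear_combination -(e1 + e2) / 2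
  · exact ⟨fun h => key h, fun h p hp => h p hp p hp⟩
end

section
/- A linear relation A is lower semi-bounded with bound m (i.e., ⟨f,g⟩ ≥ m‖f‖² for all (f,g) ∈ A and A symmetric) if and only if A is symmetric and for every real α < m and every (h,k) ∈ (A − αI)^{-1}, one has ‖k‖ ≤ (m − α)^{-1}‖h‖. -/
open scoped InnerProductSpace

variable {H : Type*} [NormedAddCommGroup H] [InnerProductSpace ℂ H]

/-- A relation is lower semi-bounded with bound `m` iff it is symmetric and
`‖(A − αI)⁻¹‖ ≤ (m − α)⁻¹` for every real `α < m`. -/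
theorem lowerSemibounded_iff (A : Submodule ℂ (H × H)) (m : ℝ) :
    ((∀ p ∈ A, ((inner ℂ p.1 p.2 : ℂ)).im = 0) ∧
        ∀ p ∈ A, m * ‖p.1‖ ^ 2 ≤ ((inner ℂ p.1 p.2 : ℂ)).re) ↔
      ((∀ p ∈ A, ((inner ℂ p.1 p.2 : ℂ)).im = 0) ∧
        ∀ α : ℝ, α < m → ∀ p ∈ A, ‖p.1‖ ≤ (m - α)⁻¹ * ‖p.2 - (α : ℂ) • p.1‖) := by
  have expand : ∀ (f g : H) (α : ℝ), ‖g - (α : ℂ) • f‖ ^ 2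
      = ‖g‖ ^ 2 - 2 * α * ((inner ℂ f g : ℂ)).re + α ^ 2 * ‖f‖ ^ 2 := by
    intro f g α
    rw [norm_sub_sq (𝕜 := ℂ), inner_smul_right, norm_smul]
    have h1 : ((inner ℂ g f : ℂ)).re = ((inner ℂ f g : ℂ)).re := by
      simpa using inner_re_symm (𝕜 := ℂ) g f
    simp [Complex.mul_re, h1]
    rw [mul_pow, sq_abs]; ring
  constructor
  · rintro ⟨hsym, hbd⟩
    refine ⟨hsym, ?_⟩
    intro α hα p hp
    have hb := hbd p hp
    have hpos : 0 < m - α := by linarith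
    have hre : ((inner ℂ p.1 (p.2 - (α : ℂ) • p.1) : ℂ)).re
        = ((inner ℂ p.1 p.2 : ℂ)).re - α * ‖p.1‖ ^ 2 := by
      rw [inner_sub_right, inner_smul_right]
      have h0 : ((inner ℂ p.1 p.1 : ℂ)) = (‖p.1‖ : ℂ) ^ 2 := inner_self_eq_norm_sq_to_K p.1
      simp [h0, Complex.mul_re, ← Complex.ofReal_pow]
    have hcs : ((inner ℂ p.1 (p.2 - (α : ℂ) • p.1) : ℂ)).re
        ≤ ‖p.1‖ * ‖p.2 - (α : ℂ) • p.1‖ := by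
      exact re_inner_le_norm (𝕜 := ℂ) p.1 (p.2 - (α : ℂ) • p.1)
    have key : (m - α) * ‖p.1‖ ^ 2 ≤ ‖p.1‖ * ‖p.2 - (α : ℂ) • p.1‖ := by
      rw [hre] at hcs; nlinarith
    rw [le_inv_mul_iff₀ hpos]
    rcases eq_or_lt_of_le (norm_nonneg p.1) with h0 | h0
    · rw [← h0, mul_zero]; positivity
    · have := mul_le_mul_of_nonneg_left key (le_of_lt (inv_pos.mpr h0))
      calc (m - α) * ‖p.1‖ = ‖p.1‖⁻¹ * ((m - α) * ‖p.1‖ ^ 2) := by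
            field_simp
        _ ≤ ‖p.1‖⁻¹ * (‖p.1‖ * ‖p.2 - (α : ℂ) • p.1‖) := this
        _ = ‖p.2 - (α : ℂ) • p.1‖ := by field_simp
  · rintro ⟨hsym, h⟩
    refine ⟨hsym, ?_⟩
    intro p hp
    set r := ((inner ℂ p.1 p.2 : ℂ)).re with hr
    by_contra hc
    push_neg at hc
    set c := r - m * ‖p.1‖ ^ 2 with hcdef
    have hcneg : c < 0 := by simp [hcdef]; linarith
    set C := ‖p.2‖ ^ 2 - m ^ 2 * ‖p.1‖ ^ 2 with hCdef
    have key : ∀ α : ℝ, α < m → 2 * α * c ≤ C := by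
      intro α hα
      have hpos : 0 < m - α := by linarith
      have h1 := h α hα p hp
      have h2 : (m - α) * ‖p.1‖ ≤ ‖p.2 - (α : ℂ) • p.1‖ := by
        rw [le_inv_mul_iff₀ hpos] at h1; exact h1
      have h3 : ((m - α) * ‖p.1‖) ^ 2 ≤ ‖p.2 - (α : ℂ) • p.1‖ ^ 2 := by
        apply pow_le_pow_left₀ (by positivity) h2
      rw [expand p.1 p.2 α] at h3
      simp only [hcdef, hCdef]
      nlinarith
    set α₀ := min (m - 1) ((C - 2 * c) / (2 * c)) with hα₀
    have hα₀m : α₀ < m := lt_of_le_of_lt (min_le_left _ _) (by linarith)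
    have h4 := key α₀ hα₀m
    have h5 : α₀ ≤ (C - 2 * c) / (2 * c) := min_le_right _ _
    have h6 : C - 2 * c ≤ 2 * c * α₀ := by
      rw [le_div_iff_of_neg (by linarith : 2 * c < 0)] at h5
      linarith
    linarith
end

section
/- Let A be a closed quasi-null relation, S a closed positive extension of A with orthogonal decomposition S = A ⊕ L, L ⊆ A*. Then for every (f,g) ∈ A and (h,k) ∈ L, one has ⟨f,k⟩ = 0 and ⟨g,h⟩ = 0. -/
open scoped InnerProductSpace

variable {H : Type*} [NormedAddCommGroup H] [InnerProductSpace ℂ H]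

/-- For a closed positive symmetric extension `S = A ⊕ L` of a closed quasi-null relation
`A`, one has `⟨f,k⟩ = 0` and `⟨g,h⟩ = 0` for all `(f,g) ∈ A`, `(h,k) ∈ L = S ⊖ A`. -/
theorem quasiNull_extension_orthogonality (A S : Submodule ℂ (H × H))
    (hAc : IsClosed (A : Set (H × H))) (hSc : IsClosed (S : Set (H × H)))
    (hAqn : ∀ p ∈ A, (inner ℂ p.1 p.2 : ℂ) = 0)
    (hAS : A ≤ S) (hSsym : S ≤ adjointRel S)
    (hSpos : ∀ p ∈ S, ((inner ℂ p.1 p.2 : ℂ)).im = 0 ∧ 0 ≤ ((inner ℂ p.1 p.2 : ℂ)).re) :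
    ∀ p ∈ A, ∀ q ∈ S ⊓ orthRel A,
      (inner ℂ p.1 q.2 : ℂ) = 0 ∧ (inner ℂ p.2 q.1 : ℂ) = 0 := by
  intro p hp q hq
  have hz2 : (inner ℂ p.2 q.1 : ℂ) = (inner ℂ p.1 q.2 : ℂ) := hSsym (hAS hp) q hq.1
  set z : ℂ := inner ℂ p.1 q.2 with hz
  suffices hz0 : z = 0 by exact ⟨hz0, hz2.trans hz0⟩
  by_contra hzne
  have hnz : 0 < Complex.normSq z := Complex.normSq_pos.mpr hzne
  obtain ⟨hwim, hwre⟩ := hSpos q hq.1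
  set w : ℂ := inner ℂ q.1 q.2 with hw
  obtain ⟨t, htpos, h1⟩ : ∃ t : ℝ, 0 < t ∧ t * (w.re + 1) = 1 :=
    ⟨1/(w.re + 1), by positivity, by field_simp⟩
  set c : ℂ := -(t:ℂ) * (starRingEnd ℂ) z with hc
  have hmem : (p + c • q) ∈ S := S.add_mem (hAS hp) (S.smul_mem c hq.1)
  obtain ⟨hEim, hEre⟩ := hSpos _ hmem
  have hpq : (inner ℂ p.1 p.2 : ℂ) = 0 := hAqn p hp
  have hqp : (inner ℂ q.1 p.2 : ℂ) = (starRingEnd ℂ) z := by rw [← inner_conj_symm, hz2]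
  have hE : (inner ℂ (p + c • q).1 (p + c • q).2 : ℂ)
      = -2*(t:ℂ)*Complex.normSq z + (t:ℂ)^2 * Complex.normSq z * w := by
    simp only [Prod.fst_add, Prod.snd_add, Prod.smul_fst, Prod.smul_snd,
      inner_add_left, inner_add_right, inner_smul_left, inner_smul_right]
    rw [hpq, ← hz, hqp, ← hw, hc]
    have h1 : z * (starRingEnd ℂ) z = (Complex.normSq z : ℂ) := Complex.mul_conj z
    have h2 : ((starRingEnd ℂ) (-(t:ℂ) * (starRingEnd ℂ) z)) = -(t:ℂ) * z := by
      simp [Complex.conj_ofReal]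
    rw [h2]
    linear_combination ((t:ℂ)^2 * w - 2*(t:ℂ)) * h1
  rw [hE] at hEre
  have hre : (-2*(t:ℂ)*Complex.normSq z + (t:ℂ)^2 * Complex.normSq z * w).re
      = -2*t*Complex.normSq z + t^2 * Complex.normSq z * w.re := by
    simp [Complex.add_re, Complex.mul_re, Complex.mul_im, ← Complex.ofReal_pow]
  rw [hre] at hEre
  nlinarith [hEre, hnz, htpos, hwre, mul_pos htpos hnz, h1]
end

section
/- Let S be a closed positive extension of a closed positive linear relation A. Then A is quasi-null if and only if −S ⊆ A*. -/
open scoped InnerProductSpace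

variable {H : Type*} [NormedAddCommGroup H] [InnerProductSpace ℂ H]

/-- For a closed positive extension `S` of a closed positive relation `A`:
`A` is quasi-null iff `−S ⊆ A*`. -/
theorem quasiNull_iff_neg_ext_in_adjoint (A S : Submodule ℂ (H × H))
    (hAc : IsClosed (A : Set (H × H))) (hSc : IsClosed (S : Set (H × H)))
    (hApos : ∀ p ∈ A, ((inner ℂ p.1 p.2 : ℂ)).im = 0 ∧ 0 ≤ ((inner ℂ p.1 p.2 : ℂ)).re)
    (hAS : A ≤ S) (hSsym : S ≤ adjointRel S)
    (hSpos : ∀ p ∈ S, ((inner ℂ p.1 p.2 : ℂ)).im = 0 ∧ 0 ≤ ((inner ℂ p.1 p.2 : ℂ)).re) :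
    (∀ p ∈ A, (inner ℂ p.1 p.2 : ℂ) = 0) ↔ S.map negMap ≤ adjointRel A := by
  have hsym : ∀ p ∈ S, ∀ q ∈ S, (inner ℂ p.2 q.1 : ℂ) = inner ℂ p.1 q.2 :=
    fun p hp => hSsym hp
  constructor
  · intro hqn
    -- First, real parts vanish
    have hre : ∀ p ∈ S, ∀ q ∈ A, ((inner ℂ p.1 q.2 : ℂ)).re = 0 := by
      intro p hp q hq
      set z : ℂ := inner ℂ p.1 q.2 with hzdef
      set b : ℝ := ((inner ℂ p.1 p.2 : ℂ)).re with hbdef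
      have hb : 0 ≤ b := (hSpos p hp).2
      have key : ∀ t : ℝ, 0 ≤ 2*t*z.re + t^2 * b := by
        intro t
        have hmem : q + (t:ℂ) • p ∈ S := S.add_mem (hAS hq) (S.smul_mem _ hp)
        have hpos := (hSpos _ hmem).2
        have hz0 : (inner ℂ q.1 q.2 : ℂ) = 0 := hqn q hq
        have hsy : (inner ℂ p.2 q.1 : ℂ) = z := hsym p hp q (hAS hq)
        have hq1 : (inner ℂ q.1 p.2 : ℂ) = (starRingEnd ℂ) z := by
          rw [← inner_conj_symm, hsy]
        have hexp : (inner ℂ (q + (t:ℂ) • p).1 (q + (t:ℂ) • p).2 : ℂ)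
            = (t:ℂ) * (2 * z.re) + (t:ℂ)^2 * (inner ℂ p.1 p.2 : ℂ) := by
          simp only [Prod.fst_add, Prod.snd_add, Prod.smul_fst, Prod.smul_snd,
            inner_add_left, inner_add_right, inner_smul_left, inner_smul_right,
            Complex.conj_ofReal, hz0, hq1]
          have : z + (starRingEnd ℂ) z = 2 * (z.re : ℂ) := by
            rw [Complex.add_conj]; push_cast; ring
          rw [← hzdef]
          linear_combination (t:ℂ) * this
        rw [hexp] at hpos
        convert hpos using 1
        simp [Complex.add_re, Complex.mul_re, Complex.ofReal_re, Complex.ofReal_im,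
          ← Complex.ofReal_pow, ← hbdef]
        ring
      have hb1 : (0:ℝ) < b + 1 := by linarith
      set u : ℝ := z.re / (b + 1) with hudef
      have hu : z.re = u * (b + 1) := (div_mul_cancel₀ _ hb1.ne').symm
      have hk := key (-u)
      rw [hu] at hk
      have hu2 : u ^ 2 ≤ 0 := by nlinarith
      have hu0 : u = 0 := by
        have := le_antisymm hu2 (sq_nonneg u)
        exact sq_eq_zero_iff.mp this
      rw [hu, hu0, zero_mul]
    -- Now full vanishing of cross terms
    have hz : ∀ p ∈ S, ∀ q ∈ A, (inner ℂ p.1 q.2 : ℂ) = 0 := by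
      intro p hp q hq
      have h1 := hre p hp q hq
      have h2 := hre (Complex.I • p) (S.smul_mem _ hp) q hq
      simp only [Prod.smul_fst, inner_smul_left, Complex.conj_I] at h2
      apply Complex.ext h1
      simpa [Complex.mul_re] using h2
    intro p hp
    obtain ⟨r, hr, rfl⟩ := Submodule.mem_map.mp hp
    intro q hq
    have h1 : (inner ℂ r.2 q.1 : ℂ) = inner ℂ r.1 q.2 := hsym r hr q (hAS hq)
    have h2 : (inner ℂ r.1 q.2 : ℂ) = 0 := hz r hr q hq
    show (inner ℂ (-(r.2)) q.1 : ℂ) = inner ℂ r.1 q.2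
    rw [inner_neg_left, h1, h2, neg_zero]
  · intro hS q hq
    have hmem : negMap q ∈ S.map negMap := Submodule.mem_map_of_mem (hAS hq)
    have h1 := hS hmem q hq
    have h2 : (inner ℂ q.2 q.1 : ℂ) = inner ℂ q.1 q.2 := hsym q (hAS hq) q (hAS hq)
    have h3 : (inner ℂ (-(q.2)) q.1 : ℂ) = inner ℂ q.1 q.2 := h1
    rw [inner_neg_left, h2] at h3
    linear_combination (-1/2 : ℂ) * h3
end

section
/- Let V = {δ_j : j ∈ ℕ₀} be an orthonormal basis of ℓ²(V), w = Σ_{j≥1} w_j δ_j ∈ ℓ² with all w_j real and nonzero, and let A = {(f, ⟨w,f⟩δ₀) : f ⊥ δ₀} be the adjacency relation of the infinite weighted star graph. Then the adjoint of A is A* = {(h, ⟨δ₀,h⟩w) : h ∈ ℓ²} ⊕ span{(0, δ₀)}, and for every nonzero ζ ∈ ℂ the deficiency space N_ζ(A*) = {(u, ζu) ∈ A*} equals span{(δ₀ + w/ζ, ζδ₀ + w)}; in particular dim N_ζ(A*) = 1. -/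
open scoped InnerProductSpace

variable {H : Type*} [NormedAddCommGroup H] [InnerProductSpace ℂ H]

/-- `ℓ²(ℕ₀)`, the Hilbert space of square-summable complex sequences. -/
noncomputable abbrev ellTwo := lp (fun _ : ℕ => ℂ) 2

/-- The canonical orthonormal basis vectors `δ_j` of `ℓ²`. -/
noncomputable def δ (j : ℕ) : ellTwo := lp.single 2 j 1

/-- The adjacency relation `A = {(f, ⟨w,f⟩δ₀) : f ⊥ δ₀}` of the infinite directed and
weighted star graph with weights `w`. -/
noncomputable def starRel (w : ellTwo) : Submodule ℂ (ellTwo × ellTwo) where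
  carrier := {p | (inner ℂ (δ 0) p.1 : ℂ) = 0 ∧ p.2 = (inner ℂ w p.1 : ℂ) • δ 0}
  add_mem' := by
    rintro a b ⟨ha1, ha2⟩ ⟨hb1, hb2⟩
    refine ⟨?_, ?_⟩
    · simp only [Prod.fst_add, inner_add_right, ha1, hb1, add_zero]
    · simp only [Prod.snd_add, Prod.fst_add, inner_add_right, ha2, hb2, add_smul]
  zero_mem' := by simp
  smul_mem' := by
    rintro c p ⟨h1, h2⟩
    refine ⟨?_, ?_⟩
    · simp only [Prod.smul_fst, inner_smul_right, h1, mul_zero]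
    · simp only [Prod.smul_snd, Prod.smul_fst, inner_smul_right, h2, smul_smul]


section Aux
lemma inner_delta (f : ellTwo) : (inner ℂ (δ 0) f : ℂ) = (f : ∀ _ : ℕ, ℂ) 0 := by
  simp [δ, lp.inner_single_left, RCLike.inner_apply]

lemma delta_self_inner : (inner ℂ (δ 0) (δ 0) : ℂ) = 1 := by
  rw [inner_delta]; simp [δ, lp.single_apply]

lemma key_lemma (k : ellTwo)
    (h : ∀ f : ellTwo, (inner ℂ (δ 0) f : ℂ) = 0 → (inner ℂ k f : ℂ) = 0) :
    k = (inner ℂ (δ 0) k : ℂ) • δ 0 := by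
  set c : ℂ := inner ℂ (δ 0) k with hc
  set f : ellTwo := k - c • δ 0 with hf
  have hperp : (inner ℂ (δ 0) f : ℂ) = 0 := by
    rw [hf, inner_sub_right, inner_smul_right, delta_self_inner, mul_one, ← hc, sub_self]
  have h1 : (inner ℂ k f : ℂ) = 0 := h f hperp
  have h2 : (inner ℂ (c • δ 0) f : ℂ) = 0 := by
    rw [inner_smul_left, hperp, mul_zero]
  have hff : (inner ℂ f f : ℂ) = 0 := by
    rw [hf, inner_sub_left, ← hf, h1, h2, sub_zero]
  have hf0 : f = 0 := inner_self_eq_zero.mp hff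
  have : k - c • δ 0 = 0 := hf ▸ hf0
  rw [sub_eq_zero] at this
  exact this
end Aux

/-- Adjoint and deficiency spaces of the adjacency relation of the infinite weighted
star graph: `A* = {(h, ⟨δ₀,h⟩w)} ⊕ span{(0,δ₀)}`, and for each `ζ ≠ 0`,
`N_ζ(A*) = span{(δ₀ + w/ζ, ζδ₀ + w)}` is one-dimensional. -/
theorem starRel_adjoint_and_deficiency (w : ellTwo)
    (hw0 : (w : ∀ _ : ℕ, ℂ) 0 = 0)
    (hw : ∀ j : ℕ, 1 ≤ j → (w : ∀ _ : ℕ, ℂ) j ≠ 0 ∧ ((w : ∀ _ : ℕ, ℂ) j).im = 0) :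
    (∀ p : ellTwo × ellTwo, p ∈ adjointRel (starRel w) ↔
        ∃ c : ℂ, p.2 = (inner ℂ (δ 0) p.1 : ℂ) • w + c • δ 0) ∧
    ∀ ζ : ℂ, ζ ≠ 0 →
      adjointRel (starRel w) ⊓ LinearMap.graph (ζ • (LinearMap.id : ellTwo →ₗ[ℂ] ellTwo)) =
          Submodule.span ℂ {((δ 0 + ζ⁻¹ • w, ζ • δ 0 + w) : ellTwo × ellTwo)} ∧
        Module.finrank ℂ
          ↥(adjointRel (starRel w) ⊓
            LinearMap.graph (ζ • (LinearMap.id : ellTwo →ₗ[ℂ] ellTwo))) = 1 := by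
  
  have hw00 : (inner ℂ (δ 0) w : ℂ) = 0 := by rw [inner_delta, hw0]
  have hadj : ∀ p : ellTwo × ellTwo, p ∈ adjointRel (starRel w) ↔
      ∃ c : ℂ, p.2 = (inner ℂ (δ 0) p.1 : ℂ) • w + c • δ 0 := by
    intro p
    constructor
    · intro hp
      have hp' : ∀ q ∈ starRel w, (inner ℂ p.2 q.1 : ℂ) = inner ℂ p.1 q.2 := hp
      set k : ellTwo := p.2 - (inner ℂ (δ 0) p.1 : ℂ) • w with hk
      have hkey : ∀ f : ellTwo, (inner ℂ (δ 0) f : ℂ) = 0 → (inner ℂ k f : ℂ) = 0 := by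
        intro f hf
        have hq : (f, (inner ℂ w f : ℂ) • δ 0) ∈ starRel w := ⟨hf, rfl⟩
        have := hp' _ hq
        simp only [inner_smul_right] at this
        rw [hk, inner_sub_left, inner_smul_left, this, inner_conj_symm]
        ring
      have := key_lemma k hkey
      refine ⟨inner ℂ (δ 0) k, ?_⟩
      have h2 : p.2 = (inner ℂ (δ 0) p.1 : ℂ) • w + k := by rw [hk]; abel
      rw [h2]; nth_rewrite 1 [this]; rfl
    · rintro ⟨c, hc⟩ q hq
      obtain ⟨hq1, hq2⟩ : (inner ℂ (δ 0) q.1 : ℂ) = 0 ∧ q.2 = (inner ℂ w q.1 : ℂ) • δ 0 := hq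
      rw [hc, hq2, inner_add_left, inner_smul_left, inner_smul_left, inner_smul_right,
        hq1, mul_zero, add_zero, inner_conj_symm]
      ring
  refine ⟨hadj, ?_⟩
  intro ζ hζ
  set v : ellTwo × ellTwo := (δ 0 + ζ⁻¹ • w, ζ • δ 0 + w) with hv
  have hv1 : (inner ℂ (δ 0) v.1 : ℂ) = 1 := by
    rw [hv]
    simp only [inner_add_right, inner_smul_right, delta_self_inner, hw00, mul_zero, add_zero]
  have hvgraph : v.2 = ζ • v.1 := by
    rw [hv]
    simp only [smul_add, smul_smul, mul_inv_cancel₀ hζ, one_smul]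
  have hspan : adjointRel (starRel w) ⊓
      LinearMap.graph (ζ • (LinearMap.id : ellTwo →ₗ[ℂ] ellTwo)) =
      Submodule.span ℂ {v} := by
    apply le_antisymm
    · intro p hp
      rw [Submodule.mem_inf] at hp
      obtain ⟨hpA, hpG⟩ := hp
      rw [LinearMap.mem_graph_iff] at hpG
      simp only [LinearMap.smul_apply, LinearMap.id_apply] at hpG
      obtain ⟨c, hc⟩ := (hadj p).mp hpA
      set a : ℂ := inner ℂ (δ 0) p.1 with ha
      have hp1 : p.1 = ζ⁻¹ • (a • w + c • δ 0) := by
        rw [← hc, hpG, smul_smul, inv_mul_cancel₀ hζ, one_smul]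
      have hac : a = ζ⁻¹ * c := by
        rw [ha] ; nth_rewrite 1 [hp1]
        simp only [inner_smul_right, inner_add_right, delta_self_inner, hw00,
          mul_zero, mul_one, zero_add]
      rw [Submodule.mem_span_singleton]
      refine ⟨a, ?_⟩
      have hp1' : p.1 = a • v.1 := by
        rw [hp1, hv, hac]
        simp only [smul_add, smul_smul]
        rw [show ζ⁻¹ * (ζ⁻¹ * c) = ζ⁻¹ * c * ζ⁻¹ by ring]
        abel
      have hp2' : p.2 = a • v.2 := by
        rw [hpG, hvgraph, hp1', smul_comm]
      refine Prod.ext ?_ ?_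
      · simpa using hp1'.symm
      · simpa using hp2'.symm
    · rw [Submodule.span_singleton_le_iff_mem]
      rw [Submodule.mem_inf]
      refine ⟨(hadj v).mpr ⟨ζ, ?_⟩, ?_⟩
      · rw [hv1, one_smul]
        show v.2 = w + ζ • δ 0
        rw [hv]; abel
      · rw [LinearMap.mem_graph_iff]
        simpa using hvgraph
  refine ⟨hspan, ?_⟩
  rw [hspan]
  apply finrank_span_singleton
  intro h0
  have h1 : v.1 = 0 := by rw [h0]; rfl
  have h2 : ((v.1 : ellTwo) : ∀ _ : ℕ, ℂ) 0 = 0 := by rw [h1]; rfl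
  rw [hv] at h2
  simp only [lp.coeFn_add, lp.coeFn_smul, Pi.add_apply, Pi.smul_apply, hw0,
    smul_eq_mul, mul_zero, add_zero] at h2
  have : (δ 0 : ∀ _ : ℕ, ℂ) 0 = 1 := by simp [δ, lp.single_apply]
  rw [this] at h2
  exact one_ne_zero h2
end
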